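/- Let F be a field of characteristic 0, p a prime, and let f(x) = x^p + a_{p-1}x^{p-1} + ... + a_s x^s (lowest degree term a_s x^s, a_s ≠ 0, 1 ≤ s < p) and f'(x) = x^p + a'_{p-1}x^{p-1} + ... + a'_s x^s (same lowest degree s, a'_s ≠ 0) be polynomials over F. Given μ₀ ∈ F with a_s = μ₀^(1-s) a'_s (such μ₀ exists and, when s > 1, s - 1 < p so the equation is solvable), there is a unique formal power series ξ(x) ∈ F[[x]] with ξ(x) ≡ μ₀x mod x², satisfying f(ξ(x)) = ξ(f'(x)) as formal power series, provided that for s = 1 the coefficients satisfy a_1 ≠ (a'_1)^(i+1) for all i ≥ 1. -/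

import Mathlib

open Polynomial Finset
namespace Stmt7Aux
variable {F : Type*} [Field F]

lemma coeff_pow_lt {φ : PowerSeries F} (h : PowerSeries.constantCoeff φ = 0)
    {n k : ℕ} (hnk : n < k) : PowerSeries.coeff n (φ ^ k) = 0 := by
  have hx : (PowerSeries.X : PowerSeries F) ∣ φ := PowerSeries.X_dvd_iff.mpr h
  exact (PowerSeries.X_pow_dvd_iff.mp (pow_dvd_pow_of_dvd hx k)) n hnk

lemma coeff_pow_self {φ : PowerSeries F} (h : PowerSeries.constantCoeff φ = 0)
    (k : ℕ) : PowerSeries.coeff k (φ ^ k) = (PowerSeries.coeff 1 φ) ^ k := by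
  induction k with
  | zero => simp
  | succ k ih =>
    rw [pow_succ, PowerSeries.coeff_mul, Finset.sum_eq_single (k, 1)]
    · rw [ih, pow_succ]
    · rintro ⟨a, b⟩ hab hne
      rw [Finset.HasAntidiagonal.mem_antidiagonal] at hab
      rcases lt_trichotomy a k with h1 | rfl | h1
      · rw [coeff_pow_lt h h1, zero_mul]
      · exact absurd (by simp; omega) hne
      · have hb : b = 0 := by omega
        subst hb
        rw [PowerSeries.coeff_zero_eq_constantCoeff_apply, h, mul_zero]
    · intro hn; exact absurd (Finset.HasAntidiagonal.mem_antidiagonal.mpr (by omega)) hn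

lemma coeff_mul_pow_lt {φ ψ : PowerSeries F} (hφ : PowerSeries.constantCoeff φ = 0)
    (hψ : PowerSeries.constantCoeff ψ = 0) {a j l : ℕ} (h : a < j + l) :
    PowerSeries.coeff a (φ ^ j * ψ ^ l) = 0 := by
  have hx : (PowerSeries.X : PowerSeries F) ^ (j + l) ∣ φ ^ j * ψ ^ l := by
    rw [pow_add]
    exact mul_dvd_mul (pow_dvd_pow_of_dvd (PowerSeries.X_dvd_iff.mpr hφ) j)
      (pow_dvd_pow_of_dvd (PowerSeries.X_dvd_iff.mpr hψ) l)
  exact (PowerSeries.X_pow_dvd_iff.mp hx) a h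

lemma coeff_mul_pow_self {φ ψ : PowerSeries F} (hφ : PowerSeries.constantCoeff φ = 0)
    (hψ : PowerSeries.constantCoeff ψ = 0) (j l : ℕ) :
    PowerSeries.coeff (j + l) (φ ^ j * ψ ^ l)
      = (PowerSeries.coeff 1 φ) ^ j * (PowerSeries.coeff 1 ψ) ^ l := by
  rw [PowerSeries.coeff_mul, Finset.sum_eq_single (j, l)]
  · rw [coeff_pow_self hφ, coeff_pow_self hψ]
  · rintro ⟨a, b⟩ hab hne
    rw [Finset.HasAntidiagonal.mem_antidiagonal] at hab
    rcases lt_trichotomy a j with h1 | rfl | h1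
    · rw [coeff_pow_lt hφ h1, zero_mul]
    · exact absurd (by simp; omega) hne
    · rw [coeff_pow_lt hψ (by omega), mul_zero]
  · intro hn; exact absurd (Finset.HasAntidiagonal.mem_antidiagonal.mpr (by omega)) hn

/-- core: difference of coeff (m-1+s) of k-th powers. -/
lemma pow_diff (s : ℕ) (hs : 1 ≤ s) (ξ η : PowerSeries F)
    (h0ξ : PowerSeries.constantCoeff ξ = 0) (h0η : PowerSeries.constantCoeff η = 0)
    (m : ℕ) (hm : 2 ≤ m)
    (hagree : ∀ j < m, PowerSeries.coeff j ξ = PowerSeries.coeff j η)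
    (k : ℕ) (hk : s ≤ k) :
    PowerSeries.coeff (m - 1 + s) (ξ ^ k) - PowerSeries.coeff (m - 1 + s) (η ^ k)
      = (if k = s then (s : F) * (PowerSeries.coeff 1 ξ) ^ (s - 1)
          * (PowerSeries.coeff m ξ - PowerSeries.coeff m η) else 0) := by
  have key : ξ ^ k - η ^ k = (∑ j ∈ Finset.range k, ξ ^ j * η ^ (k - 1 - j)) * (ξ - η) :=
    (geom_sum₂_mul ξ η k).symm
  rw [← map_sub, key, PowerSeries.coeff_mul]
  by_cases hks : k = s
  · subst hks
    rw [Finset.sum_eq_single (k - 1, m), if_pos rfl]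
    · rw [map_sub]
      congr 1
      rw [map_sum]
      have hterm : ∀ j ∈ Finset.range k,
          PowerSeries.coeff (k - 1) (ξ ^ j * η ^ (k - 1 - j))
            = (PowerSeries.coeff 1 ξ) ^ (k - 1) := by
        intro j hj
        rw [Finset.mem_range] at hj
        have h2 := coeff_mul_pow_self h0ξ h0η j (k - 1 - j)
        rw [show j + (k - 1 - j) = k - 1 from by omega] at h2
        rw [h2, ← hagree 1 (by omega), ← pow_add]
        congr 1
        omega
      rw [Finset.sum_congr rfl hterm, Finset.sum_const, Finset.card_range, nsmul_eq_mul]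
    · rintro ⟨a, b⟩ hab hne
      rw [Finset.HasAntidiagonal.mem_antidiagonal] at hab
      rcases lt_trichotomy b m with h1 | rfl | h1
      · have : PowerSeries.coeff b (ξ - η) = 0 := by
          rw [map_sub, hagree b h1, sub_self]
        rw [this, mul_zero]
      · exact absurd (by simp; omega) hne
      · have ha : a < k - 1 := by omega
        have : PowerSeries.coeff a (∑ j ∈ Finset.range k, ξ ^ j * η ^ (k - 1 - j)) = 0 := by
          rw [map_sum]
          refine Finset.sum_eq_zero fun j hj => ?_
          rw [Finset.mem_range] at hj
          exact coeff_mul_pow_lt h0ξ h0η (by omega)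
        rw [this, zero_mul]
    · intro hn; exact absurd (Finset.HasAntidiagonal.mem_antidiagonal.mpr (by omega)) hn
  · rw [if_neg hks]
    refine Finset.sum_eq_zero ?_
    rintro ⟨a, b⟩ hab
    rw [Finset.HasAntidiagonal.mem_antidiagonal] at hab
    rcases lt_or_ge b m with h1 | h1
    · have : PowerSeries.coeff b (ξ - η) = 0 := by
        rw [map_sub, hagree b h1, sub_self]
      rw [this, mul_zero]
    · have ha : a < k - 1 := by omega
      have : PowerSeries.coeff a (∑ j ∈ Finset.range k, ξ ^ j * η ^ (k - 1 - j)) = 0 := by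
        rw [map_sum]
        refine Finset.sum_eq_zero fun j hj => ?_
        rw [Finset.mem_range] at hj
        exact coeff_mul_pow_lt h0ξ h0η (by omega)
      rw [this, zero_mul]

lemma lhs_diff (f : Polynomial F) (s : ℕ) (hs : 1 ≤ s) (hlow : ∀ i < s, f.coeff i = 0)
    (ξ η : PowerSeries F) (h0ξ : PowerSeries.constantCoeff ξ = 0)
    (h0η : PowerSeries.constantCoeff η = 0) (m : ℕ) (hm : 2 ≤ m)
    (hagree : ∀ j < m, PowerSeries.coeff j ξ = PowerSeries.coeff j η) :
    PowerSeries.coeff (m - 1 + s) (f.eval₂ (PowerSeries.C (R := F)) ξ)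
      - PowerSeries.coeff (m - 1 + s) (f.eval₂ (PowerSeries.C (R := F)) η)
    = (s : F) * f.coeff s * (PowerSeries.coeff 1 ξ) ^ (s - 1)
        * (PowerSeries.coeff m ξ - PowerSeries.coeff m η) := by
  rw [Polynomial.eval₂_eq_sum_range, Polynomial.eval₂_eq_sum_range, map_sum, map_sum,
    ← Finset.sum_sub_distrib]
  have step : ∀ k ∈ Finset.range (f.natDegree + 1),
      PowerSeries.coeff (m - 1 + s) (PowerSeries.C (R := F) (f.coeff k) * ξ ^ k)
        - PowerSeries.coeff (m - 1 + s) (PowerSeries.C (R := F) (f.coeff k) * η ^ k)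
      = (if k = s then (s : F) * f.coeff s * (PowerSeries.coeff 1 ξ) ^ (s - 1)
          * (PowerSeries.coeff m ξ - PowerSeries.coeff m η) else 0) := by
    intro k _
    rw [PowerSeries.coeff_C_mul, PowerSeries.coeff_C_mul, ← mul_sub]
    rcases lt_or_ge k s with hks | hks
    · rw [hlow k hks, if_neg (by omega), zero_mul]
    · rw [pow_diff s hs ξ η h0ξ h0η m hm hagree k hks]
      by_cases h : k = s
      · subst h; rw [if_pos rfl, if_pos rfl]; ring
      · rw [if_neg h, if_neg h, mul_zero]
  rw [Finset.sum_congr rfl step, Finset.sum_ite_eq' (Finset.range (f.natDegree + 1)) s]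
  by_cases hmem : s ∈ Finset.range (f.natDegree + 1)
  · rw [if_pos hmem]
  · rw [if_neg hmem]
    rw [Finset.mem_range] at hmem
    rw [Polynomial.coeff_eq_zero_of_natDegree_lt (by omega)]
    ring

lemma rhs_diff (f' : Polynomial F) (s : ℕ) (hs : 1 ≤ s) (hlow' : ∀ i < s, f'.coeff i = 0)
    (ξ η : PowerSeries F) (m : ℕ) (hm : 2 ≤ m)
    (hagree : ∀ j < m, PowerSeries.coeff j ξ = PowerSeries.coeff j η) :
    PowerSeries.coeff (m - 1 + s) (∑ i ∈ Finset.range (m - 1 + s + 1),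
        PowerSeries.C (R := F) (PowerSeries.coeff i ξ) * (f' : PowerSeries F) ^ i)
      - PowerSeries.coeff (m - 1 + s) (∑ i ∈ Finset.range (m - 1 + s + 1),
        PowerSeries.C (R := F) (PowerSeries.coeff i η) * (f' : PowerSeries F) ^ i)
    = (PowerSeries.coeff m ξ - PowerSeries.coeff m η)
        * PowerSeries.coeff (m - 1 + s) ((f' : PowerSeries F) ^ m) := by
  have hXs : (PowerSeries.X : PowerSeries F) ^ s ∣ (f' : PowerSeries F) := by
    rw [PowerSeries.X_pow_dvd_iff]
    intro t ht
    rw [Polynomial.coeff_coe]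
    exact hlow' t ht
  rw [map_sum, map_sum, ← Finset.sum_sub_distrib]
  rw [Finset.sum_congr rfl (fun i _ => by
    rw [PowerSeries.coeff_C_mul, PowerSeries.coeff_C_mul, ← sub_mul])]
  rw [Finset.sum_eq_single m]
  · rintro i hi hne
    rcases lt_or_ge i m with h1 | h1
    · rw [hagree i h1, sub_self, zero_mul]
    · have him : m + 1 ≤ i := by omega
      have : PowerSeries.coeff (m - 1 + s) ((f' : PowerSeries F) ^ i) = 0 := by
        have hdvd : (PowerSeries.X : PowerSeries F) ^ (i * s) ∣ (f' : PowerSeries F) ^ i := by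
          rw [mul_comm, pow_mul]
          exact pow_dvd_pow_of_dvd hXs i
        refine (PowerSeries.X_pow_dvd_iff.mp hdvd) _ ?_
        have h2 : (m + 1) * s ≤ i * s := Nat.mul_le_mul_right s him
        have h3 : m * 1 ≤ m * s := Nat.mul_le_mul_left m hs
        have : (m + 1) * s = m * s + s := by ring
        omega
      rw [this, mul_zero]
  · intro hn
    exact absurd (Finset.mem_range.mpr (by omega)) hn

lemma dval (f' : Polynomial F) (s : ℕ) (hs : 1 ≤ s) (hlow' : ∀ i < s, f'.coeff i = 0)
    (m : ℕ) (hm : 2 ≤ m) :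
    PowerSeries.coeff (m - 1 + s) ((f' : PowerSeries F) ^ m)
      = if s = 1 then (f'.coeff 1) ^ m else 0 := by
  have h0 : PowerSeries.constantCoeff (f' : PowerSeries F) = 0 := by
    rw [← PowerSeries.coeff_zero_eq_constantCoeff_apply, Polynomial.coeff_coe]
    exact hlow' 0 hs
  by_cases h1 : s = 1
  · subst h1
    rw [if_pos rfl]
    have : m - 1 + 1 = m := by omega
    rw [this, coeff_pow_self h0, Polynomial.coeff_coe]
  · rw [if_neg h1]
    have hXs : (PowerSeries.X : PowerSeries F) ^ s ∣ (f' : PowerSeries F) := by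
      rw [PowerSeries.X_pow_dvd_iff]
      intro t ht
      rw [Polynomial.coeff_coe]
      exact hlow' t ht
    have hdvd : (PowerSeries.X : PowerSeries F) ^ (m * s) ∣ (f' : PowerSeries F) ^ m := by
      rw [mul_comm, pow_mul]
      exact pow_dvd_pow_of_dvd hXs m
    refine (PowerSeries.X_pow_dvd_iff.mp hdvd) _ ?_
    have hs2 : 2 ≤ s := by omega
    obtain ⟨a, rfl⟩ : ∃ a, m = a + 2 := ⟨m - 2, by omega⟩
    obtain ⟨b, rfl⟩ : ∃ b, s = b + 2 := ⟨s - 2, by omega⟩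
    have : (a + 2) * (b + 2) = a * b + 2 * a + 2 * b + 4 := by ring
    omega

noncomputable def seq (f f' : Polynomial F) (s : ℕ) (μ₀ : F) : ℕ → F
  | 0 => 0
  | 1 => μ₀
  | (m + 2) =>
    (PowerSeries.coeff (m + 1 + s) (∑ i ∈ Finset.range (m + 1 + s + 1),
        PowerSeries.C (R := F) (PowerSeries.coeff i (PowerSeries.mk fun j =>
          if h : j < m + 2 then seq f f' s μ₀ j else 0)) * (f' : PowerSeries F) ^ i)
      - PowerSeries.coeff (m + 1 + s) (f.eval₂ (PowerSeries.C (R := F))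
          (PowerSeries.mk fun j => if h : j < m + 2 then seq f f' s μ₀ j else 0)))
    / ((s : F) * f.coeff s * μ₀ ^ (s - 1)
        - PowerSeries.coeff (m + 1 + s) ((f' : PowerSeries F) ^ (m + 2)))
  termination_by m => m
  decreasing_by all_goals omega


end Stmt7Aux

open Polynomial Finset Stmt7Aux


/-- Proposition 3.2 (converse direction): over a field `F` of characteristic 0,
given monic degree-`p` polynomials `f, f'` whose lowest-degree nonzero terms are
`a_s x^s` and `a'_s x^s` (same `s`, `1 ≤ s < p`), and `μ₀ ≠ 0` with
`a_s = μ₀^(1-s) a'_s` (i.e. `μ₀^(s-1)·a_s = a'_s`), and assuming in the case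
`s = 1` that `a_1 ≠ (a'_1)^(i+1)` for all `i ≥ 1`, there is a *unique* formal
power series `ξ ∈ F[[x]]` with `ξ ≡ μ₀ x mod x²` satisfying `f(ξ(x)) = ξ(f'(x))`
(the composition equation being encoded coefficient-wise as in the paper, using
that `f'` has zero constant term). -/
theorem stmt_7 {F : Type*} [Field F] [CharZero F]
    (p : ℕ) (hp : p.Prime)
    (f f' : Polynomial F)
    (hfm : f.Monic) (hfd : f.natDegree = p)
    (hfm' : f'.Monic) (hfd' : f'.natDegree = p)
    (s : ℕ) (hs : 1 ≤ s) (hsp : s < p)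
    (hfs : f.coeff s ≠ 0) (hlow : ∀ i < s, f.coeff i = 0)
    (hfs' : f'.coeff s ≠ 0) (hlow' : ∀ i < s, f'.coeff i = 0)
    (μ₀ : F) (hμ₀ : μ₀ ≠ 0)
    (hrel : μ₀ ^ (s - 1) * f.coeff s = f'.coeff s)
    (hside : s = 1 → ∀ i : ℕ, 1 ≤ i → f.coeff 1 ≠ (f'.coeff 1) ^ (i + 1)) :
    ∃! ξ : PowerSeries F,
      PowerSeries.constantCoeff ξ = 0 ∧
      PowerSeries.coeff 1 ξ = μ₀ ∧
      ∀ N : ℕ,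
        PowerSeries.coeff N (Polynomial.eval₂ (PowerSeries.C (R := F)) ξ f) =
          PowerSeries.coeff N (∑ i ∈ Finset.range (N + 1),
            PowerSeries.C (R := F) (PowerSeries.coeff i ξ) * (f' : PowerSeries F) ^ i) := by
  -- the nondegeneracy constant
  have hcd : ∀ m, 2 ≤ m →
      (s : F) * f.coeff s * μ₀ ^ (s - 1)
        - PowerSeries.coeff (m - 1 + s) ((f' : PowerSeries F) ^ m) ≠ 0 := by
    intro m hm
    rw [Stmt7Aux.dval f' s hs hlow' m hm]
    by_cases h1 : s = 1
    · subst h1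
      rw [if_pos rfl]
      have hne := hside rfl (m - 1) (by omega)
      rw [show m - 1 + 1 = m from by omega] at hne
      have hc : ((1 : ℕ) : F) * f.coeff 1 * μ₀ ^ (1 - 1) = f.coeff 1 := by norm_num
      rw [hc]
      exact sub_ne_zero.mpr hne
    · rw [if_neg h1, sub_zero]
      exact mul_ne_zero (mul_ne_zero (Nat.cast_ne_zero.mpr (by omega)) hfs)
        (pow_ne_zero _ hμ₀)
  have hXs : (PowerSeries.X : PowerSeries F) ^ s ∣ (f' : PowerSeries F) := by
    rw [PowerSeries.X_pow_dvd_iff]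
    intro t ht
    rw [Polynomial.coeff_coe]
    exact hlow' t ht
  have hf'pow : ∀ i N : ℕ, N < i * s →
      PowerSeries.coeff N ((f' : PowerSeries F) ^ i) = 0 := by
    intro i N h
    have hdvd : (PowerSeries.X : PowerSeries F) ^ (i * s) ∣ (f' : PowerSeries F) ^ i := by
      rw [mul_comm i s, pow_mul]
      exact pow_dvd_pow_of_dvd hXs i
    exact (PowerSeries.X_pow_dvd_iff.mp hdvd) N h
  set ξ : PowerSeries F := PowerSeries.mk (seq f f' s μ₀) with hξdef
  have hξ0 : PowerSeries.constantCoeff ξ = 0 := by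
    rw [← PowerSeries.coeff_zero_eq_constantCoeff_apply, hξdef, PowerSeries.coeff_mk]
    simp [seq]
  have hξ1 : PowerSeries.coeff 1 ξ = μ₀ := by
    rw [hξdef, PowerSeries.coeff_mk]
    simp [seq]
  -- ξ satisfies all the coefficient equations
  have he : ∀ N : ℕ,
      PowerSeries.coeff N (Polynomial.eval₂ (PowerSeries.C (R := F)) ξ f) =
        PowerSeries.coeff N (∑ i ∈ Finset.range (N + 1),
          PowerSeries.C (R := F) (PowerSeries.coeff i ξ) * (f' : PowerSeries F) ^ i) := by
    intro N
    rcases lt_trichotomy N s with hNs | heq | hNs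
    · -- N < s : both sides vanish
      rw [Polynomial.eval₂_eq_sum_range, map_sum, map_sum]
      simp only [PowerSeries.coeff_C_mul]
      rw [Finset.sum_eq_zero, Finset.sum_eq_zero]
      · intro i hi
        rcases Nat.eq_zero_or_pos i with rfl | hipos
        · rw [PowerSeries.coeff_zero_eq_constantCoeff_apply, hξ0, zero_mul]
        · rw [hf'pow i N (by nlinarith), mul_zero]
      · intro k hk
        rcases lt_or_ge N k with h1 | h1
        · rw [coeff_pow_lt hξ0 h1, mul_zero]
        · rw [hlow k (by omega), zero_mul]
    · -- N = s
      subst heq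
      rw [Polynomial.eval₂_eq_sum_range, map_sum, map_sum]
      simp only [PowerSeries.coeff_C_mul]
      rw [Finset.sum_eq_single N, Finset.sum_eq_single 1]
      · rw [coeff_pow_self hξ0, hξ1, pow_one, Polynomial.coeff_coe]
        have hpow : μ₀ ^ N = μ₀ ^ (N - 1) * μ₀ := by
          rw [← pow_succ]
          congr 1
          omega
        rw [hpow]
        linear_combination μ₀ * hrel
      · intro i hi hne
        rcases Nat.eq_zero_or_pos i with rfl | hipos
        · rw [PowerSeries.coeff_zero_eq_constantCoeff_apply, hξ0, zero_mul]
        · have h2 : 2 ≤ i := by omega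
          rw [hf'pow i N (by nlinarith), mul_zero]
      · intro hn
        exact absurd (Finset.mem_range.mpr (by omega)) hn
      · intro k hk hne
        rcases lt_or_ge N k with h1 | h1
        · rw [coeff_pow_lt hξ0 h1, mul_zero]
        · rw [hlow k (by omega), zero_mul]
      · intro hn
        exact absurd (Finset.mem_range.mpr (by omega)) hn
    · -- N > s : the recursive case
      obtain ⟨m, rfl⟩ : ∃ m, N = m + 1 + s := ⟨N - s - 1, by omega⟩
      set τ : PowerSeries F :=
        PowerSeries.mk (fun j => if h : j < m + 2 then seq f f' s μ₀ j else 0) with hτdef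
      have hτ0 : PowerSeries.constantCoeff τ = 0 := by
        rw [← PowerSeries.coeff_zero_eq_constantCoeff_apply, hτdef, PowerSeries.coeff_mk]
        simp [seq]
      have hagree : ∀ j < m + 2, PowerSeries.coeff j ξ = PowerSeries.coeff j τ := by
        intro j hj
        rw [hξdef, hτdef, PowerSeries.coeff_mk, PowerSeries.coeff_mk, dif_pos hj]
      have hτm : PowerSeries.coeff (m + 2) τ = 0 := by
        rw [hτdef, PowerSeries.coeff_mk, dif_neg (by omega)]
      have hξm : PowerSeries.coeff (m + 2) ξ = seq f f' s μ₀ (m + 2) := by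
        rw [hξdef, PowerSeries.coeff_mk]
      have hidx : m + 2 - 1 + s = m + 1 + s := by omega
      have hdiffL := lhs_diff f s hs hlow ξ τ hξ0 hτ0 (m + 2) (by omega) hagree
      have hdiffR := rhs_diff f' s hs hlow' ξ τ (m + 2) (by omega) hagree
      rw [hidx] at hdiffL hdiffR
      rw [hξ1] at hdiffL
      rw [hτm, hξm, sub_zero] at hdiffL hdiffR
      have hneq := hcd (m + 2) (by omega)
      rw [hidx] at hneq
      have hseq : seq f f' s μ₀ (m + 2)
          * ((s : F) * f.coeff s * μ₀ ^ (s - 1)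
              - PowerSeries.coeff (m + 1 + s) ((f' : PowerSeries F) ^ (m + 2))) =
          PowerSeries.coeff (m + 1 + s) (∑ i ∈ Finset.range (m + 1 + s + 1),
              PowerSeries.C (R := F) (PowerSeries.coeff i τ) * (f' : PowerSeries F) ^ i)
            - PowerSeries.coeff (m + 1 + s) (f.eval₂ (PowerSeries.C (R := F)) τ) := by
        rw [seq]
        exact div_mul_cancel₀ _ hneq
      linear_combination hdiffL - hdiffR + hseq
  refine ⟨ξ, ⟨hξ0, hξ1, he⟩, ?_⟩
  rintro η ⟨h0, h1, hE⟩
  have key : ∀ n, PowerSeries.coeff n η = PowerSeries.coeff n ξ := by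
    intro n
    induction n using Nat.strong_induction_on with
    | _ n ih =>
      rcases Nat.lt_or_ge n 2 with h2 | h2
      · interval_cases n
        · rw [PowerSeries.coeff_zero_eq_constantCoeff_apply,
            PowerSeries.coeff_zero_eq_constantCoeff_apply, h0, hξ0]
        · rw [h1, hξ1]
      · have hdiffL := lhs_diff f s hs hlow η ξ h0 hξ0 n h2 ih
        have hdiffR := rhs_diff f' s hs hlow' η ξ n h2 ih
        have hEn := hE (n - 1 + s)
        have hen := he (n - 1 + s)
        rw [h1] at hdiffL
        have hzero : ((s : F) * f.coeff s * μ₀ ^ (s - 1)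
            - PowerSeries.coeff (n - 1 + s) ((f' : PowerSeries F) ^ n))
            * (PowerSeries.coeff n η - PowerSeries.coeff n ξ) = 0 := by
          linear_combination -hdiffL + hdiffR + hEn - hen
        rcases mul_eq_zero.mp hzero with hbad | hgood
        · exact absurd hbad (hcd n h2)
        · exact sub_eq_zero.mp hgood
  exact PowerSeries.ext key
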